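/- Let G be a directed graph and M_u : ↑↑ → Ĉ(↑↑) the representation with M_u(0) a single arrow p₀ → p₁ and M_u(1) the graph q₀ → q₁ ← q₂ with m₀·a = b₀, m₁·a = b₁. Then for arcs x, y of G, φ₁^{M_u,G}(x) = φ₁^{M_u,G}(y) if and only if there is an undirected path between x and y in G, i.e., x and y lie in the same weakly connected component. -/

import Mathlib

open CategoryTheory Limits Opposite WalkingParallelPair WalkingParallelPairHom

universe v w

section Machinery

variable {C : Type} [SmallCategory C] {D : Type w} [Category.{v} D]

/-- The diagram `Elts(G) → C → D` whose colimit is `G ⊗ M`. -/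
def elemDiagram (M : C ⥤ D) (G : Cᵒᵖ ⥤ Type) : G.Elementsᵒᵖ ⥤ D :=
  (CategoryOfElements.π G).leftOp ⋙ M

/-- `G ⊗ M`, the left Kan extension of `M` along Yoneda evaluated at `G`, computed as the
colimit of `M` over the category of elements of `G`. -/
noncomputable def tensorObj (M : C ⥤ D) (G : Cᵒᵖ ⥤ Type)
    [HasColimitsOfShape G.Elementsᵒᵖ D] : D :=
  colimit (elemDiagram M G)

/-- The colimit injection `μ^{M,G}_{(c,x)} : M(c) ⟶ G ⊗ M`. -/
noncomputable def tensorι (M : C ⥤ D) (G : Cᵒᵖ ⥤ Type)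
    [HasColimitsOfShape G.Elementsᵒᵖ D] (c : C) (x : G.obj (op c)) :
    M.obj c ⟶ tensorObj M G :=
  colimit.ι (elemDiagram M G) (op ⟨op c, x⟩)

/-- The diagram `Elts(y(c)) ≅ Over c → C → D` whose limit is the interface `Int_M(c)`. -/
def overDiagram (M : C ⥤ D) (c : C) : Over c ⥤ D :=
  Over.forget c ⋙ M

/-- The interface `Int_M(c)` of a representation `M` at `c`. -/
noncomputable def interfaceObj (M : C ⥤ D) [∀ c : C, HasLimitsOfShape (Over c) D] (c : C) : D :=
  limit (overDiagram M c)

/-- The limit projection `ν^{M,c}_{(c',f)} : Int_M(c) ⟶ M(c')`. -/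
noncomputable def interfaceπ (M : C ⥤ D) [∀ c : C, HasLimitsOfShape (Over c) D]
    {c' c : C} (f : c' ⟶ c) : interfaceObj M c ⟶ M.obj c' :=
  limit.π (overDiagram M c) (Over.mk f)

/-- The interface transformation `φ^{M,G}_c : G(c) → Hom_D(Int_M(c), G ⊗ M)`,
`x ↦ μ^{M,G}_{(c,x)} ∘ ν^{M,c}_{(c,id_c)}`. -/
noncomputable def interfaceTrans (M : C ⥤ D) (G : Cᵒᵖ ⥤ Type)
    [HasColimitsOfShape G.Elementsᵒᵖ D] [∀ c : C, HasLimitsOfShape (Over c) D]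
    (c : C) (x : G.obj (op c)) : interfaceObj M c ⟶ tensorObj M G :=
  interfaceπ M (𝟙 c) ≫ tensorι M G c x

end Machinery

section DirectedGraphs

/-- Arcs of a directed graph `G`, presented as a presheaf on the walking parallel pair. -/
abbrev arcs (G : WalkingParallelPairᵒᵖ ⥤ Type) : Type := G.obj (op one)

/-- Nodes of the directed graph `G`. -/
abbrev nodes (G : WalkingParallelPairᵒᵖ ⥤ Type) : Type := G.obj (op zero)

/-- The source map of `G`. -/
abbrev srcMap (G : WalkingParallelPairᵒᵖ ⥤ Type) : arcs G → nodes G :=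
  G.map (Quiver.Hom.op left)

/-- The target map of `G`. -/
abbrev tgtMap (G : WalkingParallelPairᵒᵖ ⥤ Type) : arcs G → nodes G :=
  G.map (Quiver.Hom.op right)

/-- The presheaf on `↑↑` (i.e. the directed graph) determined by source/target maps. -/
def dgPresheaf {A N : Type} (s t : A → N) : WalkingParallelPairᵒᵖ ⥤ Type :=
  walkingParallelPairOpEquiv.inverse ⋙ parallelPair (TypeCat.ofHom s) (TypeCat.ofHom t)

/-- A homomorphism of directed graphs, as a morphism of the associated presheaves. -/
def dgHom {A N A' N' : Type} (s t : A → N) (s' t' : A' → N')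
    (α : A → A') (ν : N → N') (hs : ∀ a, s' (α a) = ν (s a)) (ht : ∀ a, t' (α a) = ν (t a)) :
    dgPresheaf s t ⟶ dgPresheaf s' t' :=
  Functor.whiskerLeft walkingParallelPairOpEquiv.inverse
    (parallelPairHom (C := Type) (TypeCat.ofHom s) (TypeCat.ofHom t) (TypeCat.ofHom s')
      (TypeCat.ofHom t') (TypeCat.ofHom α) (TypeCat.ofHom ν)
      (by ext a; exact (hs a).symm) (by ext a; exact (ht a).symm))

end DirectedGraphs

/-- The representation `M_u` of `↑↑`: `M_u(0)` is the single-arrow graph `p₀ → p₁`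
(nodes `Bool`), `M_u(1)` is the graph `q₀ → q₁ ← q₂` (arcs `Bool`, `false = b₀`, `true = b₁`;
nodes `Fin 3`, `0 = q₀, 1 = q₁, 2 = q₂`), with `M_u(m₀) : a ↦ b₀` and `M_u(m₁) : a ↦ b₁`. -/
def Mu : WalkingParallelPair ⥤ (WalkingParallelPairᵒᵖ ⥤ Type) :=
  parallelPair
    (dgHom (fun _ : PUnit => false) (fun _ => true)
      (fun b : Bool => if b then (2 : Fin 3) else 0) (fun _ => 1)
      (fun _ => (false : Bool)) (fun b : Bool => if b then 1 else 0)
      (fun _ => rfl) (fun _ => rfl))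
    (dgHom (fun _ : PUnit => false) (fun _ => true)
      (fun b : Bool => if b then (2 : Fin 3) else 0) (fun _ => 1)
      (fun _ => (true : Bool)) (fun b : Bool => if b then 1 else 2)
      (fun _ => rfl) (fun _ => rfl))

/-- Two arcs are related if they share an endpoint (ignoring directions); chains for this
relation, i.e. its equivalence closure, are the undirected paths between arcs. -/
def undirRel (G : WalkingParallelPairᵒᵖ ⥤ Type) : arcs G → arcs G → Prop :=
  fun f g => srcMap G f = srcMap G g ∨ srcMap G f = tgtMap G g ∨
    tgtMap G f = srcMap G g ∨ tgtMap G f = tgtMap G g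

lemma bool_aux (a b : Bool) :
    (if a then (1:Fin 3) else 0) = (if b then 1 else 2) → a = true ∧ b = true := by cases a <;> cases b <;> decide

lemma pi_w (f : WalkingParallelPairHom zero one) :
    interfaceπ Mu f ≫ Mu.map f = interfaceπ Mu (𝟙 one) := by
  have := limit.w (overDiagram Mu one) (Over.homMk f : Over.mk f ⟶ Over.mk (𝟙 one))
  exact this

lemma pi_left_eq_right : interfaceπ Mu (left : zero ⟶ one) = interfaceπ Mu (right : zero ⟶ one) := by
  have h : interfaceπ Mu (left : zero ⟶ one) ≫ Mu.map left
      = interfaceπ Mu (right : zero ⟶ one) ≫ Mu.map right := by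
    rw [pi_w left, pi_w right]
  ext k u
  match k with
  | op one => exact Subsingleton.elim (α := PUnit) ((interfaceπ Mu (left : zero ⟶ one)).app (op one) u) _
  | op zero =>
    have h2 := ConcreteCategory.congr_hom (NatTrans.congr_app h (op zero)) u
    obtain ⟨ha, hb⟩ := bool_aux ((interfaceπ Mu (left : zero ⟶ one)).app (op zero) u)
      ((interfaceπ Mu (right : zero ⟶ one)).app (op zero) u) h2
    show (interfaceπ Mu (left : zero ⟶ one)).app (op zero) u
        = (interfaceπ Mu (right : zero ⟶ one)).app (op zero) u
    rw [ha, hb]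
lemma trans_factor (G : WalkingParallelPairᵒᵖ ⥤ Type) (x : arcs G) (f : zero ⟶ one) :
    interfaceTrans Mu G one x = interfaceπ Mu f ≫ tensorι Mu G zero (G.map f.op x) := by
  unfold interfaceTrans
  rw [← pi_w f, Category.assoc]
  congr 1
  exact colimit.w (elemDiagram Mu G)
    (Quiver.Hom.op (CategoryOfElements.homMk (F := G)
      ⟨op one, x⟩ ⟨op zero, G.map f.op x⟩ f.op rfl))
lemma rev_dir (G : WalkingParallelPairᵒᵖ ⥤ Type) (x y : arcs G)
    (h : Relation.EqvGen (undirRel G) x y) :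
    interfaceTrans Mu G one x = interfaceTrans Mu G one y := by
  induction h with
  | rel a b hab =>
    rcases hab with h | h | h | h
    · rw [trans_factor G a left, trans_factor G b left]
      show _ ≫ tensorι Mu G zero (srcMap G a) = _ ≫ tensorι Mu G zero (srcMap G b)
      rw [h]
    · rw [trans_factor G a left, trans_factor G b right, pi_left_eq_right]
      show _ ≫ tensorι Mu G zero (srcMap G a) = _ ≫ tensorι Mu G zero (tgtMap G b)
      rw [h]
    · rw [trans_factor G a right, trans_factor G b left, pi_left_eq_right]
      show _ ≫ tensorι Mu G zero (tgtMap G a) = _ ≫ tensorι Mu G zero (srcMap G b)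
      rw [h]
    · rw [trans_factor G a right, trans_factor G b right]
      show _ ≫ tensorι Mu G zero (tgtMap G a) = _ ≫ tensorι Mu G zero (tgtMap G b)
      rw [h]
  | refl => rfl
  | symm _ _ _ ih => exact ih.symm
  | trans _ _ _ _ _ ih1 ih2 => exact ih1.trans ih2
/-- Family giving the canonical node of the interface. -/
def ptFam : ∀ c : WalkingParallelPair, (Mu.obj c).obj (op zero)
  | .zero => (true : Bool)
  | .one => (1 : Fin 3)

lemma ptFam_nat : ∀ (a b : WalkingParallelPair) (g : a ⟶ b),
    (Mu.map g).app (op zero) (ptFam a) = ptFam b := by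
  intro a b g
  cases g using WalkingParallelPairHom.casesOn with
  | left => rfl
  | right => rfl
  | id =>
    show (Mu.map (𝟙 a)).app (op zero) (ptFam a) = ptFam a
    rw [CategoryTheory.Functor.map_id]
    rfl

/-- The canonical node of the interface presheaf. -/
noncomputable def intPt : (interfaceObj Mu one).obj (op zero) :=
  (limitObjIsoLimitCompEvaluation (overDiagram Mu one) (op zero)).inv
    ((Types.limitEquivSections _).symm ⟨fun j => ptFam j.left, fun f => ptFam_nat _ _ f.left⟩)

/-- Labels for arc-indexed elements. -/
def labOne (G : WalkingParallelPairᵒᵖ ⥤ Type) (e : arcs G) :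
    Fin 3 → Quot (undirRel G) ⊕ nodes G
  | 0 => Sum.inr (srcMap G e)
  | 1 => Sum.inl (Quot.mk _ e)
  | 2 => Sum.inr (tgtMap G e)

open Classical in
noncomputable def labZero (G : WalkingParallelPairᵒᵖ ⥤ Type) (n : nodes G) :
    Bool → Quot (undirRel G) ⊕ nodes G
  | true =>
    if h : ∃ z : arcs G, srcMap G z = n ∨ tgtMap G z = n then
      Sum.inl (Quot.mk _ h.choose)
    else Sum.inr n
  | false => Sum.inr n

/-- Labelling of elements of the pointwise colimit diagram. -/
noncomputable def lab (G : WalkingParallelPairᵒᵖ ⥤ Type) :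
    ∀ (c : WalkingParallelPair), G.obj (op c) → (Mu.obj c).obj (op zero) →
      Quot (undirRel G) ⊕ nodes G
  | .one => fun e v => labOne G e v
  | .zero => fun n v => labZero G n v

open Classical in
lemma labZero_true (G : WalkingParallelPairᵒᵖ ⥤ Type) (n : nodes G) (e' : arcs G)
    (he : srcMap G e' = n ∨ tgtMap G e' = n) :
    labZero G n true = Sum.inl (Quot.mk (undirRel G) e') := by
  have hex : ∃ z : arcs G, srcMap G z = n ∨ tgtMap G z = n := ⟨e', he⟩
  show (if h : ∃ z : arcs G, srcMap G z = n ∨ tgtMap G z = n then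
      Sum.inl (Quot.mk (undirRel G) h.choose) else Sum.inr n) = _
  rw [dif_pos hex]
  refine congrArg _ (Quot.sound ?_)
  rcases hex.choose_spec with hc | hc <;> rcases he with hd | hd
  · exact Or.inl (hc.trans hd.symm)
  · exact Or.inr (Or.inl (hc.trans hd.symm))
  · exact Or.inr (Or.inr (Or.inl (hc.trans hd.symm)))
  · exact Or.inr (Or.inr (Or.inr (hc.trans hd.symm)))

lemma lab_step_left (G : WalkingParallelPairᵒᵖ ⥤ Type) (e' : arcs G) (b : Bool) :
    labZero G (srcMap G e') b = labOne G e' ((Mu.map left).app (op zero) b) := by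
  cases b with
  | false => rfl
  | true => exact labZero_true G _ e' (Or.inl rfl)

lemma lab_step_right (G : WalkingParallelPairᵒᵖ ⥤ Type) (e' : arcs G) (b : Bool) :
    labZero G (tgtMap G e') b = labOne G e' ((Mu.map right).app (op zero) b) := by
  cases b with
  | false => rfl
  | true => exact labZero_true G _ e' (Or.inr rfl)

lemma lab_step (G : WalkingParallelPairᵒᵖ ⥤ Type) {c c' : WalkingParallelPair}
    (h : c ⟶ c') (e : G.obj (op c)) (e' : G.obj (op c')) (he : G.map h.op e' = e)
    (v : (Mu.obj c).obj (op zero)) :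
    lab G c e v = lab G c' e' ((Mu.map h).app (op zero) v) := by
  cases h using WalkingParallelPairHom.casesOn with
  | left => subst he; exact lab_step_left G e' v
  | right => subst he; exact lab_step_right G e' v
  | id =>
    have he' : e' = e := by simpa using he
    subst he'
    show lab G c e' v = lab G c e' ((Mu.map (𝟙 c)).app (op zero) v)
    rw [CategoryTheory.Functor.map_id]
    rfl
noncomputable def labSigma (G : WalkingParallelPairᵒᵖ ⥤ Type)
    (p : Σ j : G.Elementsᵒᵖ,
      (elemDiagram Mu G ⋙ (evaluation WalkingParallelPairᵒᵖ Type).obj (op zero)).obj j) :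
    Quot (undirRel G) ⊕ nodes G :=
  lab G p.1.unop.1.unop p.1.unop.2 p.2

lemma labSigma_rel (G : WalkingParallelPairᵒᵖ ⥤ Type)
    {p q : Σ j : G.Elementsᵒᵖ,
      (elemDiagram Mu G ⋙ (evaluation WalkingParallelPairᵒᵖ Type).obj (op zero)).obj j}
    (h : Functor.ColimitTypeRel (elemDiagram Mu G ⋙ (evaluation WalkingParallelPairᵒᵖ Type).obj (op zero)) p q) :
    labSigma G p = labSigma G q := by
  obtain ⟨j, v⟩ := p
  obtain ⟨j', v'⟩ := q
  obtain ⟨f, hq⟩ := h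
  rw [show labSigma G ⟨j', v'⟩ = labSigma G ⟨j', (elemDiagram Mu G ⋙ (evaluation WalkingParallelPairᵒᵖ Type).obj (op zero)).map f v⟩ from congrArg _ (congrArg _ hq)]
  exact lab_step G f.unop.1.unop j.unop.2 j'.unop.2 f.unop.2 v

lemma labSigma_eqv (G : WalkingParallelPairᵒᵖ ⥤ Type)
    {p q : Σ j : G.Elementsᵒᵖ,
      (elemDiagram Mu G ⋙ (evaluation WalkingParallelPairᵒᵖ Type).obj (op zero)).obj j}
    (h : Relation.EqvGen
      (Functor.ColimitTypeRel (elemDiagram Mu G ⋙ (evaluation WalkingParallelPairᵒᵖ Type).obj (op zero))) p q) :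
    labSigma G p = labSigma G q := by
  induction h with
  | rel _ _ hr => exact labSigma_rel G hr
  | refl => rfl
  | symm _ _ _ ih => exact ih.symm
  | trans _ _ _ _ _ ih1 ih2 => exact ih1.trans ih2

lemma labOne_inj (G : WalkingParallelPairᵒᵖ ⥤ Type) (x y : arcs G) (n : Fin 3)
    (h : labOne G x n = labOne G y n) : Relation.EqvGen (undirRel G) x y := by
  match n with
  | 0 =>
    have : srcMap G x = srcMap G y := Sum.inr.inj h
    exact Relation.EqvGen.rel _ _ (Or.inl this)
  | 1 => exact Quot.eq.mp (Sum.inl.inj h)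
  | 2 =>
    have : tgtMap G x = tgtMap G y := Sum.inr.inj h
    exact Relation.EqvGen.rel _ _ (Or.inr (Or.inr (Or.inr this)))

lemma fwd_dir (G : WalkingParallelPairᵒᵖ ⥤ Type) (x y : arcs G)
    (h : interfaceTrans Mu G one x = interfaceTrans Mu G one y) :
    Relation.EqvGen (undirRel G) x y := by
  have h0 := ConcreteCategory.congr_hom (NatTrans.congr_app h (op zero)) intPt
  set n := (interfaceπ Mu (𝟙 one)).app (op zero) intPt with hn
  have h1 : (tensorι Mu G one x).app (op zero) n = (tensorι Mu G one y).app (op zero) n := h0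
  have h2 := congr_arg
    ((colimitObjIsoColimitCompEvaluation (elemDiagram Mu G) (op zero)).hom) h1
  have e1 := ConcreteCategory.congr_hom (colimitObjIsoColimitCompEvaluation_ι_app_hom (elemDiagram Mu G)
    (op (⟨op one, x⟩ : G.Elements)) (op zero)) n
  have e2 := ConcreteCategory.congr_hom (colimitObjIsoColimitCompEvaluation_ι_app_hom (elemDiagram Mu G)
    (op (⟨op one, y⟩ : G.Elements)) (op zero)) n
  have h3 : colimit.ι (elemDiagram Mu G ⋙ (evaluation WalkingParallelPairᵒᵖ Type).obj (op zero))
        (op (⟨op one, x⟩ : G.Elements)) n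
      = colimit.ι (elemDiagram Mu G ⋙ (evaluation WalkingParallelPairᵒᵖ Type).obj (op zero))
        (op (⟨op one, y⟩ : G.Elements)) n := by
    rw [← e1, ← e2]
    exact h2
  have h4 := Types.colimit_eq h3
  have h5 := labSigma_eqv G h4
  exact labOne_inj G x y n h5

/-- For a directed graph `G` and the representation `M_u`
(`M_u(0) = (p₀ → p₁)`, `M_u(1) = (q₀ → q₁ ← q₂)`), two arcs `x, y` have the same image under
the interface transformation `φ₁^{M_u,G}` iff there is an undirected path between them,
i.e. they lie in the same weakly connected component. -/
theorem statement9 (G : WalkingParallelPairᵒᵖ ⥤ Type) (x y : arcs G) :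
    interfaceTrans Mu G one x = interfaceTrans Mu G one y ↔
      Relation.EqvGen (undirRel G) x y :=
  ⟨fwd_dir G x y, rev_dir G x y⟩
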